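/- arXiv:2511.18402 — 5 statements merged into one kernel-verified Lean document; each statement's English description precedes it below -/
import Mathlib

section
/- Let X ⊆ ℝⁿ, let φ : ℝⁿ → ℝⁿ be a bijection with φ(0) = 0 satisfying (1/K)‖x‖^(1/α) ≤ ‖φ(x)‖ ≤ K‖x‖^α and ‖φ(x)-φ(y)‖ ≤ K‖x-y‖^α for all x,y near 0, where α ∈ (0,1] and K ≥ 1. Then for every d > 1 and C > 0 there exists C₂ > 0 such that φ(ST_d(X,C)) ⊆ ST_{dα²}(φ(X), C₂) as germs at 0, where ST_d(X,C) := {x : dist(x,X) ≤ C‖x‖^d}. -/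
open Metric Set

/-- The sea-tangle neighborhood of `X` of degree `d` and width `C`. -/
def seaTangle {n : ℕ} (d C : ℝ) (X : Set (EuclideanSpace ℝ (Fin n))) :
    Set (EuclideanSpace ℝ (Fin n)) :=
  {x | Metric.infDist x X ≤ C * ‖x‖ ^ d}

lemma real_rpow_add_le_add_rpow {a b p : ℝ} (ha : 0 ≤ a) (hb : 0 ≤ b)
    (hp : 0 ≤ p) (hp1 : p ≤ 1) : (a + b) ^ p ≤ a ^ p + b ^ p := by
  have h := NNReal.rpow_add_le_add_rpow a.toNNReal b.toNNReal hp hp1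
  have h' := NNReal.coe_le_coe.2 h
  push_cast [NNReal.coe_rpow] at h'
  rwa [Real.coe_toNNReal a ha, Real.coe_toNNReal b hb] at h'

/-- a bi-α-Hölder homeomorphism germ of (ℝⁿ,0) maps `seaTangle_d(X,C)` into
`seaTangle_{dα²}(φ(X), C₂)` as germs at 0. -/
theorem stmt_2 (n : ℕ) (X : Set (EuclideanSpace ℝ (Fin n)))
    (φ : EuclideanSpace ℝ (Fin n) → EuclideanSpace ℝ (Fin n))
    (hbij : Function.Bijective φ) (hφ0 : φ 0 = 0)
    (α K : ℝ) (hα : 0 < α) (hα1 : α ≤ 1) (hK : 1 ≤ K)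
    (δ : ℝ) (hδ : 0 < δ)
    (hnorm : ∀ x ∈ ball (0 : EuclideanSpace ℝ (Fin n)) δ,
      (1 / K) * ‖x‖ ^ (1 / α) ≤ ‖φ x‖ ∧ ‖φ x‖ ≤ K * ‖x‖ ^ α)
    (hHolder : ∀ x ∈ ball (0 : EuclideanSpace ℝ (Fin n)) δ,
      ∀ y ∈ ball (0 : EuclideanSpace ℝ (Fin n)) δ,
      ‖φ x - φ y‖ ≤ K * ‖x - y‖ ^ α) :
    ∀ d C : ℝ, 1 < d → 0 < C →
      ∃ C₂ : ℝ, 0 < C₂ ∧ ∃ ε : ℝ, 0 < ε ∧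
        ∀ x ∈ seaTangle d C X ∩ ball (0 : EuclideanSpace ℝ (Fin n)) ε,
          φ x ∈ seaTangle (d * α ^ 2) C₂ (φ '' X) := by
  intro d C hd hC
  have hK0 : (0 : ℝ) < K := lt_of_lt_of_le one_pos hK
  refine ⟨K * C ^ α * K ^ (d * α ^ 2), by positivity, ?_⟩
  refine ⟨min 1 (δ / (2 * (1 + C))), by positivity, ?_⟩
  rintro x ⟨hxST, hxb⟩
  rw [mem_ball_zero_iff] at hxb
  have hx1 : ‖x‖ ≤ 1 := le_of_lt (lt_of_lt_of_le hxb (min_le_left _ _))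
  have hxδ2 : ‖x‖ * (1 + C) < δ / 2 := by
    have h1 := lt_of_lt_of_le hxb (min_le_right _ _)
    have hC1 : (0 : ℝ) < 1 + C := by linarith
    calc ‖x‖ * (1 + C) < δ / (2 * (1 + C)) * (1 + C) := by
          exact mul_lt_mul_of_pos_right h1 hC1
      _ = δ / 2 := by field_simp
  have hxδ : ‖x‖ < δ := by nlinarith [norm_nonneg x]
  have hxball : x ∈ ball (0 : EuclideanSpace ℝ (Fin n)) δ := mem_ball_zero_iff.2 hxδ
  -- ‖x‖^d ≤ ‖x‖
  have hxd : ‖x‖ ^ d ≤ ‖x‖ := by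
    rcases eq_or_lt_of_le (norm_nonneg x) with h0 | h0
    · rw [← h0, Real.zero_rpow (by linarith)]
    · calc ‖x‖ ^ d ≤ ‖x‖ ^ (1 : ℝ) :=
          Real.rpow_le_rpow_of_exponent_ge h0 hx1 (le_of_lt hd)
        _ = ‖x‖ := Real.rpow_one _
  have hST : Metric.infDist x X ≤ C * ‖x‖ ^ d := hxST
  -- main estimate goal
  show Metric.infDist (φ x) (φ '' X) ≤ K * C ^ α * K ^ (d * α ^ 2) * ‖φ x‖ ^ (d * α ^ 2)
  rcases X.eq_empty_or_nonempty with rfl | hXne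
  · simp only [image_empty, Metric.infDist_empty]
    positivity
  -- Claim A: infDist (φ x) (φ '' X) ≤ K * (C * ‖x‖^d)^α
  have claimA : Metric.infDist (φ x) (φ '' X) ≤ K * (C * ‖x‖ ^ d) ^ α := by
    refine le_of_forall_pos_le_add fun ε' hε' => ?_
    set η : ℝ := min ((ε' / K) ^ α⁻¹) (δ / 2) with hη_def
    have hη_pos : 0 < η := lt_min (Real.rpow_pos_of_pos (by positivity) _) (by positivity)
    obtain ⟨y, hyX, hyd⟩ := Metric.infDist_lt_iff hXne |>.1
      (lt_of_le_of_lt (le_refl _) (lt_add_of_pos_right _ hη_pos : Metric.infDist x X <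
        Metric.infDist x X + η))
    have hdxy : dist x y < C * ‖x‖ ^ d + η := lt_of_lt_of_le hyd (by linarith)
    have hdxy0 : 0 ≤ dist x y := dist_nonneg
    have hyδ : ‖y‖ < δ := by
      have : ‖y‖ ≤ ‖x‖ + dist x y := by
        rw [dist_eq_norm]
        calc ‖y‖ = ‖x - (x - y)‖ := by rw [sub_sub_cancel]
          _ ≤ ‖x‖ + ‖x - y‖ := norm_sub_le _ _
      have hη2 : η ≤ δ / 2 := min_le_right _ _
      have hCd : C * ‖x‖ ^ d ≤ C * ‖x‖ := mul_le_mul_of_nonneg_left hxd (le_of_lt hC)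
      nlinarith [norm_nonneg x]
    have hyball : y ∈ ball (0 : EuclideanSpace ℝ (Fin n)) δ := mem_ball_zero_iff.2 hyδ
    have h1 : Metric.infDist (φ x) (φ '' X) ≤ dist (φ x) (φ y) :=
      Metric.infDist_le_dist_of_mem (mem_image_of_mem φ hyX)
    have h2 : dist (φ x) (φ y) ≤ K * ‖x - y‖ ^ α := by
      rw [dist_eq_norm]; exact hHolder x hxball y hyball
    have h3 : ‖x - y‖ ^ α ≤ (C * ‖x‖ ^ d) ^ α + η ^ α := by
      calc ‖x - y‖ ^ α ≤ (C * ‖x‖ ^ d + η) ^ α := by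
            refine Real.rpow_le_rpow (norm_nonneg _) ?_ (le_of_lt hα)
            rw [← dist_eq_norm]; exact le_of_lt hdxy
        _ ≤ (C * ‖x‖ ^ d) ^ α + η ^ α :=
            real_rpow_add_le_add_rpow (by positivity) (le_of_lt hη_pos) (le_of_lt hα) hα1
    have h4 : K * η ^ α ≤ ε' := by
      have : η ^ α ≤ ((ε' / K) ^ α⁻¹) ^ α :=
        Real.rpow_le_rpow (le_of_lt hη_pos) (min_le_left _ _) (le_of_lt hα)
      have heq : ((ε' / K) ^ α⁻¹ : ℝ) ^ α = ε' / K := by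
        rw [← Real.rpow_mul (by positivity), inv_mul_cancel₀ (ne_of_gt hα), Real.rpow_one]
      rw [heq] at this
      calc K * η ^ α ≤ K * (ε' / K) := mul_le_mul_of_nonneg_left this (le_of_lt hK0)
        _ = ε' := by field_simp
    calc Metric.infDist (φ x) (φ '' X) ≤ K * ‖x - y‖ ^ α := le_trans h1 h2
      _ ≤ K * ((C * ‖x‖ ^ d) ^ α + η ^ α) := mul_le_mul_of_nonneg_left h3 (le_of_lt hK0)
      _ = K * (C * ‖x‖ ^ d) ^ α + K * η ^ α := by ring
      _ ≤ K * (C * ‖x‖ ^ d) ^ α + ε' := by linarith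
  -- Claim B : ‖x‖ ≤ K^α * ‖φ x‖^α
  have hlow := (hnorm x hxball).1
  have hxle : ‖x‖ ≤ K ^ α * ‖φ x‖ ^ α := by
    have h5 : ‖x‖ ^ (1 / α) ≤ K * ‖φ x‖ := by
      have h := mul_le_mul_of_nonneg_left hlow (le_of_lt hK0)
      calc ‖x‖ ^ (1 / α) = K * (1 / K * ‖x‖ ^ (1 / α)) := by field_simp
        _ ≤ K * ‖φ x‖ := h
    have h6 : (‖x‖ ^ (1 / α)) ^ α ≤ (K * ‖φ x‖) ^ α :=
      Real.rpow_le_rpow (Real.rpow_nonneg (norm_nonneg _) _) h5 (le_of_lt hα)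
    rwa [← Real.rpow_mul (norm_nonneg x), one_div, inv_mul_cancel₀ (ne_of_gt hα),
      Real.rpow_one, Real.mul_rpow (le_of_lt hK0) (norm_nonneg _)] at h6
  -- Combine
  have hdα : 0 ≤ d * α := by positivity
  have hxpow : ‖x‖ ^ (d * α) ≤ K ^ (d * α ^ 2) * ‖φ x‖ ^ (d * α ^ 2) := by
    have := Real.rpow_le_rpow (norm_nonneg x) hxle hdα
    rwa [Real.mul_rpow (Real.rpow_nonneg (le_of_lt hK0) _) (Real.rpow_nonneg (norm_nonneg _) _),
      ← Real.rpow_mul (le_of_lt hK0), ← Real.rpow_mul (norm_nonneg _),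
      show α * (d * α) = d * α ^ 2 by ring] at this
  calc Metric.infDist (φ x) (φ '' X) ≤ K * (C * ‖x‖ ^ d) ^ α := claimA
    _ = K * C ^ α * ‖x‖ ^ (d * α) := by
        rw [Real.mul_rpow (le_of_lt hC) (Real.rpow_nonneg (norm_nonneg _) _),
          ← Real.rpow_mul (norm_nonneg _)]; ring
    _ ≤ K * C ^ α * (K ^ (d * α ^ 2) * ‖φ x‖ ^ (d * α ^ 2)) := by
        refine mul_le_mul_of_nonneg_left hxpow (by positivity)
    _ = K * C ^ α * K ^ (d * α ^ 2) * ‖φ x‖ ^ (d * α ^ 2) := by ring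
end

section
/- Every bounded set S ⊆ ℝⁿ of diameter d is contained in a closed ball of radius d/√2. Consequently, the outer Lebesgue measure of S is at most ω_n (d/√2)^n, where ω_n is the volume of the unit ball. -/
open Metric Set MeasureTheory
open scoped RealInnerProductSpace

set_option maxHeartbeats 1000000

section Aux

variable {E : Type*} [NormedAddCommGroup E] [InnerProductSpace ℝ E]

private lemma inner_ge_aux {c x y : E} {r d : ℝ} (hx : ‖x - c‖ = r) (hy : ‖y - c‖ = r)
    (hd0 : 0 ≤ d) (hxy : ‖x - y‖ ≤ d) : (2 * r ^ 2 - d ^ 2) / 2 ≤ ⟪x - c, y - c⟫ := by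
  have h := norm_sub_sq_real (x - c) (y - c)
  have hxy' : x - c - (y - c) = x - y := by abel
  rw [hxy', hx, hy] at h
  have hsq : ‖x - y‖ ^ 2 ≤ d ^ 2 := by nlinarith [norm_nonneg (x - y)]
  linarith

private lemma norm_perturb (x c v : E) (t : ℝ) :
    ‖x - (c + t • v)‖ ^ 2 = ‖x - c‖ ^ 2 - 2 * t * ⟪x - c, v⟫ + t ^ 2 * ‖v‖ ^ 2 := by
  have h1 : x - (c + t • v) = (x - c) - t • v := by abel
  rw [h1, norm_sub_sq_real, real_inner_smul_right, norm_smul, Real.norm_eq_abs, mul_pow, sq_abs]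
  ring

lemma jung_weak [FiniteDimensional ℝ E] {K : Set E} (hK : IsCompact K) (hne : K.Nonempty) :
    ∃ c : E, ∀ x ∈ K, dist x c ≤ Metric.diam K / Real.sqrt 2 := by
  obtain ⟨x₀, hx₀⟩ := hne
  set d : ℝ := Metric.diam K with hd
  have hd0 : 0 ≤ d := Metric.diam_nonneg
  set F : E → ℝ := fun z => sSup ((fun x => dist x z) '' K) with hF
  have hcont : ∀ z : E, Continuous fun x : E => dist x z := fun z =>
    continuous_id.dist continuous_const
  have himg : ∀ z : E, ((fun x => dist x z) '' K).Nonempty := fun z => ⟨_, ⟨x₀, hx₀, rfl⟩⟩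
  have hbdd : ∀ z : E, BddAbove ((fun x => dist x z) '' K) := fun z =>
    (hK.image (hcont z)).bddAbove
  have hle : ∀ z : E, ∀ x ∈ K, dist x z ≤ F z := fun z x hx => le_csSup (hbdd z) ⟨x, hx, rfl⟩
  have hFle : ∀ (z : E) (s : ℝ), (∀ x ∈ K, dist x z ≤ s) → F z ≤ s := by
    intro z s h
    refine csSup_le (himg z) ?_
    rintro _ ⟨x, hx, rfl⟩
    exact h x hx
  have hex : ∀ z : E, ∃ x ∈ K, F z = dist x z := by
    intro z
    obtain ⟨x, hx, hmax⟩ := hK.exists_isMaxOn ⟨x₀, hx₀⟩ (hcont z).continuousOn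
    exact ⟨x, hx, le_antisymm (hFle z _ (isMaxOn_iff.mp hmax)) (hle z x hx)⟩
  have hLip : ∀ z w : E, F z ≤ F w + dist w z := by
    intro z w
    refine hFle z _ fun x hx => ?_
    calc dist x z ≤ dist x w + dist w z := dist_triangle x w z
      _ ≤ F w + dist w z := by linarith [hle w x hx]
  have hFcont : Continuous F := by
    refine LipschitzWith.continuous (K := 1) (LipschitzWith.of_dist_le_mul fun z w => ?_)
    rw [Real.dist_eq, NNReal.coe_one, one_mul, abs_sub_le_iff]
    constructor
    · have := hLip z w; rw [dist_comm w z] at this; linarith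
    · have := hLip w z; rw [dist_comm z w, dist_comm w z] at this; linarith
  -- minimizer of F
  obtain ⟨c, hcB, hcmin⟩ := (isCompact_closedBall x₀ d).exists_isMinOn
    ⟨x₀, mem_closedBall_self hd0⟩ hFcont.continuousOn
  have hFx₀ : F x₀ ≤ d := hFle x₀ d fun x hx => Metric.dist_le_diam_of_mem hK.isBounded hx hx₀
  have hmin : ∀ z : E, F c ≤ F z := by
    intro z
    by_cases hz : z ∈ closedBall x₀ d
    · exact (isMinOn_iff.mp hcmin) z hz
    · have h1 : d < dist z x₀ := by simpa [Metric.mem_closedBall] using hz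
      have h2 : dist x₀ z ≤ F z := hle z x₀ hx₀
      rw [dist_comm] at h1
      exact ((isMinOn_iff.mp hcmin) x₀ (mem_closedBall_self hd0)).trans (by linarith)
  set r : ℝ := F c with hr
  have hr0 : 0 ≤ r := dist_nonneg.trans (hle c x₀ hx₀)
  refine ⟨c, fun x hx => (hle c x hx).trans ?_⟩
  by_contra hcon
  push_neg at hcon
  have hs2 : (0:ℝ) < Real.sqrt 2 := Real.sqrt_pos.mpr (by norm_num)
  have hrd : d < r * Real.sqrt 2 := (div_lt_iff₀ hs2).mp hcon
  have hsq2 : Real.sqrt 2 ^ 2 = 2 := Real.sq_sqrt (by norm_num)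
  have hd2r : d ^ 2 < 2 * r ^ 2 := by nlinarith
  have hrpos : 0 < r := by nlinarith
  -- the set of farthest points
  set T : Set E := {x | x ∈ K ∧ dist x c = r} with hT
  have hTK : T ⊆ K := fun x hx => hx.1
  have hTne : T.Nonempty := by
    obtain ⟨x₁, hx₁, he⟩ := hex c
    exact ⟨x₁, hx₁, he.symm⟩
  set D : Set E := closure (convexHull ℝ T) with hD
  have hDconv : Convex ℝ D := (convex_convexHull ℝ T).closure
  have hDclosed : IsClosed D := isClosed_closure
  have hTD : T ⊆ D := (subset_convexHull ℝ T).trans subset_closure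
  have hDne : D.Nonempty := hTne.mono hTD
  -- key inner product bound on T
  have hinner : ∀ x ∈ T, ∀ y ∈ T, (2 * r ^ 2 - d ^ 2) / 2 ≤ ⟪x - c, y - c⟫ := by
    intro x hx y hy
    have hxc : ‖x - c‖ = r := by rw [← dist_eq_norm]; exact hx.2
    have hyc : ‖y - c‖ = r := by rw [← dist_eq_norm]; exact hy.2
    have hxy : ‖x - y‖ ≤ d := by
      rw [← dist_eq_norm]; exact Metric.dist_le_diam_of_mem hK.isBounded (hTK hx) (hTK hy)
    exact inner_ge_aux hxc hyc hd0 hxy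
  by_cases hcD : c ∈ D
  · -- c in the closed convex hull of farthest points: halfspace contradiction
    obtain ⟨x₁, hx₁⟩ := hTne
    set w : E := x₁ - c with hw
    set ε : ℝ := (2 * r ^ 2 - d ^ 2) / 2 with hε
    have hεpos : 0 < ε := by rw [hε]; linarith
    set A : Set E := {y : E | ε + ⟪c, w⟫ ≤ ⟪y, w⟫} with hA
    have hlin : IsLinearMap ℝ fun y : E => ⟪y, w⟫ :=
      ⟨fun a b => inner_add_left a b w, fun t a => real_inner_smul_left a w t⟩
    have hAconv : Convex ℝ A := convex_halfSpace_ge hlin _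
    have hAclosed : IsClosed A :=
      isClosed_le continuous_const (continuous_id.inner continuous_const)
    have hTA : T ⊆ A := by
      intro y hy
      have := hinner y hy x₁ hx₁
      have h2 : ⟪y - c, w⟫ = ⟪y, w⟫ - ⟪c, w⟫ := inner_sub_left y c w
      simp only [hA, Set.mem_setOf_eq]
      rw [hw] at h2 ⊢
      linarith [h2 ▸ this]
    have hDA : D ⊆ A := closure_minimal (convexHull_min hTA hAconv) hAclosed
    have := hDA hcD
    simp only [hA, Set.mem_setOf_eq] at this
    linarith
  · -- c outside: project and perturb
    obtain ⟨p, hpD, hp⟩ := exists_norm_eq_iInf_of_complete_convex hDne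
      hDclosed.isComplete hDconv c
    have hproj : ∀ y ∈ D, ⟪c - p, y - p⟫ ≤ 0 :=
      (norm_eq_iInf_iff_real_inner_le_zero hDconv hpD).mp hp
    set v : E := p - c with hv
    have hvne : v ≠ 0 := sub_ne_zero.mpr fun h => hcD (h ▸ hpD)
    set δ : ℝ := ‖v‖ ^ 2 with hδ
    have hδpos : 0 < δ := hδ ▸ pow_pos (norm_pos_iff.mpr hvne) 2
    have hTv : ∀ x ∈ T, δ ≤ ⟪x - c, v⟫ := by
      intro x hx
      have h1 : x - c = (x - p) + v := by rw [hv]; abel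
      have h2 : ⟪x - c, v⟫ = ⟪x - p, v⟫ + ⟪v, v⟫ := by rw [h1, inner_add_left]
      have h3 : ⟪v, v⟫ = δ := real_inner_self_eq_norm_sq v
      have h4 : (0:ℝ) ≤ ⟪x - p, v⟫ := by
        have := hproj x (hTD hx)
        have hcomm : ⟪x - p, v⟫ = - ⟪c - p, x - p⟫ := by
          rw [hv, show (p : E) - c = -(c - p) by abel, inner_neg_right, real_inner_comm]
        linarith [hcomm ▸ neg_nonneg.mpr this]
      linarith [h2, h3 ▸ h2]
    -- find a perturbation making all distances < r
    have hvcont : Continuous fun x : E => ⟪x - c, v⟫ :=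
      (continuous_id.sub continuous_const).inner continuous_const
    obtain ⟨t, ht0, ht1, hfar⟩ :
        ∃ t : ℝ, 0 < t ∧ t ≤ 1 / 2 ∧ ∀ x ∈ K, dist x (c + t • v) < r := by
      set K' : Set E := {x | x ∈ K ∧ ⟪x - c, v⟫ ≤ δ / 2} with hK'
      have hK'com : IsCompact K' := by
        have : K' = K ∩ {x : E | ⟪x - c, v⟫ ≤ δ / 2} := rfl
        rw [this]
        exact hK.inter_right (isClosed_le hvcont continuous_const)
      -- bound squared distances for points with large inner product
      have hbig : ∀ (t : ℝ), 0 < t → t ≤ 1 / 2 → ∀ x ∈ K, δ / 2 < ⟪x - c, v⟫ →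
          dist x (c + t • v) < r := by
        intro t h0 h12 x hx hbx
        have hn := norm_perturb x c v t
        have hxcr : ‖x - c‖ ≤ r := by rw [← dist_eq_norm]; exact hle c x hx
        have h1 : ‖x - c‖ ^ 2 ≤ r ^ 2 := by nlinarith [norm_nonneg (x - c)]
        have h2 : t ^ 2 * δ ≤ t * δ / 2 := by
          nlinarith [mul_nonneg (mul_pos h0 hδpos).le (by linarith : (0:ℝ) ≤ 1 / 2 - t)]
        have h3 : t * δ < 2 * t * ⟪x - c, v⟫ := by
          nlinarith [mul_pos h0 (show (0:ℝ) < ⟪x - c, v⟫ - δ / 2 by linarith)]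
        have h4 : 0 < t * δ := mul_pos h0 hδpos
        have hsq : ‖x - (c + t • v)‖ ^ 2 < r ^ 2 := by
          rw [hn, ← hδ]
          linarith
        have h0' : 0 ≤ ‖x - (c + t • v)‖ := norm_nonneg _
        rw [dist_eq_norm]
        nlinarith
      by_cases hK'ne : K'.Nonempty
      · obtain ⟨x', hx', hmax'⟩ := hK'com.exists_isMaxOn hK'ne (hcont c).continuousOn
        set r' : ℝ := dist x' c with hr'
        have hr'lt : r' < r := by
          rcases lt_or_eq_of_le (hle c x' hx'.1) with h | h
          · exact h
          · exact absurd (hTv x' ⟨hx'.1, h⟩) (by linarith [hx'.2])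
        have hr'0 : 0 ≤ r' := dist_nonneg
        set t : ℝ := min (1 / 2) ((r - r') / (2 * ‖v‖)) with htdef
        have hvn : 0 < ‖v‖ := norm_pos_iff.mpr hvne
        have ht0 : 0 < t := lt_min (by norm_num) (div_pos (by linarith) (by positivity))
        have ht12 : t ≤ 1 / 2 := min_le_left _ _
        refine ⟨t, ht0, ht12, fun x hx => ?_⟩
        by_cases hxK' : ⟪x - c, v⟫ ≤ δ / 2
        · have hxr' : dist x c ≤ r' := (isMaxOn_iff.mp hmax') x ⟨hx, hxK'⟩
          have htv : t * ‖v‖ ≤ (r - r') / 2 := by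
            have : t ≤ (r - r') / (2 * ‖v‖) := min_le_right _ _
            calc t * ‖v‖ ≤ (r - r') / (2 * ‖v‖) * ‖v‖ := by
                  exact mul_le_mul_of_nonneg_right this hvn.le
              _ = (r - r') / 2 := by field_simp
          have hstep : dist c (c + t • v) = t * ‖v‖ := by
            rw [dist_eq_norm, show (c : E) - (c + t • v) = -(t • v) by abel,
              norm_neg, norm_smul, Real.norm_eq_abs, abs_of_pos ht0]
          calc dist x (c + t • v) ≤ dist x c + dist c (c + t • v) := dist_triangle _ _ _
            _ = dist x c + t * ‖v‖ := by rw [hstep]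
            _ ≤ r' + (r - r') / 2 := add_le_add hxr' htv
            _ < r := by linarith
        · exact hbig t ht0 ht12 x hx (lt_of_not_ge hxK')
      · refine ⟨1 / 2, by norm_num, le_refl _, fun x hx => ?_⟩
        have : ¬(⟪x - c, v⟫ ≤ δ / 2) := fun h => hK'ne ⟨x, hx, h⟩
        exact hbig (1 / 2) (by norm_num) (le_refl _) x hx (lt_of_not_ge this)
    obtain ⟨x₂, hx₂, he₂⟩ := hex (c + t • v)
    have : F (c + t • v) < r := he₂ ▸ hfar x₂ hx₂
    exact absurd (hmin (c + t • v)) (by linarith)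

end Aux

/-- weak Jung theorem: every bounded set of diameter d in ℝⁿ is contained
in a closed ball of radius d/√2; consequently its outer measure is at most
ω_n (d/√2)^n. -/
theorem stmt_6 (n : ℕ) (S : Set (EuclideanSpace ℝ (Fin n)))
    (hS : Bornology.IsBounded S) (d : ℝ) (hd : Metric.diam S = d) :
    (∃ c : EuclideanSpace ℝ (Fin n), S ⊆ Metric.closedBall c (d / Real.sqrt 2)) ∧
    volume S ≤
      ENNReal.ofReal
        ((volume (Metric.ball (0 : EuclideanSpace ℝ (Fin n)) 1)).toReal *
          (d / Real.sqrt 2) ^ (n : ℕ)) := by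
  have hd0 : 0 ≤ d := hd ▸ Metric.diam_nonneg
  have hρ0 : 0 ≤ d / Real.sqrt 2 := div_nonneg hd0 (Real.sqrt_nonneg 2)
  have hvol : ∀ c : EuclideanSpace ℝ (Fin n),
      volume (Metric.closedBall c (d / Real.sqrt 2)) =
        ENNReal.ofReal
          ((volume (Metric.ball (0 : EuclideanSpace ℝ (Fin n)) 1)).toReal *
            (d / Real.sqrt 2) ^ (n : ℕ)) := by
    intro c
    rw [MeasureTheory.Measure.addHaar_closedBall volume c hρ0, finrank_euclideanSpace_fin,
      ENNReal.ofReal_mul ENNReal.toReal_nonneg,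
      ENNReal.ofReal_toReal measure_ball_lt_top.ne,
      ENNReal.ofReal_pow hρ0, mul_comm]
  rcases S.eq_empty_or_nonempty with hSe | hSne
  · subst hSe
    exact ⟨⟨0, empty_subset _⟩, by simp⟩
  · have hKcom : IsCompact (closure S) := hS.isCompact_closure
    obtain ⟨c, hc⟩ := jung_weak hKcom hSne.closure
    rw [Metric.diam_closure, hd] at hc
    have hsub : S ⊆ Metric.closedBall c (d / Real.sqrt 2) :=
      fun x hx => hc x (subset_closure hx)
    exact ⟨⟨c, hsub⟩, (hvol c) ▸ measure_mono hsub⟩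
end

section
/- Let X ⊆ ℝⁿ be a set with 0 ∈ closure(X), and suppose X and Y ⊆ ℝⁿ are ST-equivalent at 0: there exist d₁, d₂ > 1 and C₁, C₂ > 0 with Y ⊆ ST_{d₁}(X,C₁) and X ⊆ ST_{d₂}(Y,C₂) as germs at 0. Then the tangent cones agree: C₀(X) = C₀(Y), where C₀(X) := {v ∈ ℝⁿ : ∃ sequences xₖ ∈ X, xₖ → 0, λₖ > 0 with λₖxₖ → v}. -/
open Metric Set Filter Topology

/-- The tangent cone of `X ⊆ ℝⁿ` at `0`: limits `v = lim λₖ xₖ` with `xₖ ∈ X`,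
`xₖ → 0`, `λₖ > 0`. -/
def tangentConeAtZero {n : ℕ} (X : Set (EuclideanSpace ℝ (Fin n))) :
    Set (EuclideanSpace ℝ (Fin n)) :=
  {v | ∃ (x : ℕ → EuclideanSpace ℝ (Fin n)) (l : ℕ → ℝ),
    (∀ k, x k ∈ X) ∧ Tendsto x atTop (𝓝 0) ∧ (∀ k, 0 < l k) ∧
    Tendsto (fun k => l k • x k) atTop (𝓝 v)}

lemma zero_mem_tc {n : ℕ} {X : Set (EuclideanSpace ℝ (Fin n))}
    (hX : (0 : EuclideanSpace ℝ (Fin n)) ∈ closure X) :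
    (0 : EuclideanSpace ℝ (Fin n)) ∈ tangentConeAtZero X := by
  obtain ⟨x, hx, hlim⟩ := mem_closure_iff_seq_limit.1 hX
  exact ⟨x, fun _ => 1, hx, hlim, fun _ => one_pos, by simpa using hlim⟩

lemma tc_subset {n : ℕ} {X Y : Set (EuclideanSpace ℝ (Fin n))}
    (hX : (0 : EuclideanSpace ℝ (Fin n)) ∈ closure X)
    {d C ε : ℝ} (hd : 1 < d) (hC : 0 < C) (hε : 0 < ε)
    (h : ∀ y ∈ Y ∩ ball (0 : EuclideanSpace ℝ (Fin n)) ε,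
      Metric.infDist y X ≤ C * ‖y‖ ^ d) :
    tangentConeAtZero Y ⊆ tangentConeAtZero X := by
  have hXne : X.Nonempty := by
    rcases closure_nonempty_iff.1 ⟨0, hX⟩ with h'; exact h'
  intro v hv
  obtain ⟨y, l, hyY, hy0, hl, hlv⟩ := hv
  by_cases hv0 : v = 0
  · subst hv0; exact zero_mem_tc hX
  have hnv : 0 < ‖v‖ := norm_pos_iff.2 hv0
  have hly : Tendsto (fun k => l k * ‖y k‖) atTop (𝓝 ‖v‖) := by
    have := hlv.norm
    simpa [norm_smul, abs_of_pos (hl _)] using this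
  have h1 : ∀ᶠ k in atTop, ‖v‖ / 2 < l k * ‖y k‖ :=
    hly.eventually_const_lt (by linarith)
  have h2 : ∀ᶠ k in atTop, ‖y k‖ < ε := by
    have hn : Tendsto (fun k => ‖y k‖) atTop (𝓝 0) := by simpa using hy0.norm
    exact hn.eventually_lt_const hε
  obtain ⟨N, hN⟩ := eventually_atTop.1 (h1.and h2)
  have hypos : ∀ k, 0 < ‖y (k + N)‖ := by
    intro k
    have hk := (hN (k + N) (Nat.le_add_left N k)).1
    by_contra hc
    push_neg at hc
    have : ‖y (k + N)‖ = 0 := le_antisymm hc (norm_nonneg _)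
    rw [this, mul_zero] at hk
    linarith
  have key : ∀ k, ∃ x ∈ X, dist (y (k + N)) x < (C + 1) * ‖y (k + N)‖ ^ d := by
    intro k
    have hk := hN (k + N) (Nat.le_add_left N k)
    have hmem : y (k + N) ∈ Y ∩ ball (0 : EuclideanSpace ℝ (Fin n)) ε :=
      ⟨hyY _, by simpa [mem_ball, dist_zero_right] using hk.2⟩
    have hle := h _ hmem
    have hr : 0 < ‖y (k + N)‖ ^ d := Real.rpow_pos_of_pos (hypos k) d
    have : Metric.infDist (y (k + N)) X < (C + 1) * ‖y (k + N)‖ ^ d :=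
      lt_of_le_of_lt hle (by nlinarith)
    exact (Metric.infDist_lt_iff hXne).1 this
  choose x hxX hxd using key
  -- shifted limits
  have hy0' : Tendsto (fun k => y (k + N)) atTop (𝓝 0) :=
    hy0.comp (tendsto_add_atTop_nat N)
  have hly' : Tendsto (fun k => l (k + N) * ‖y (k + N)‖) atTop (𝓝 ‖v‖) :=
    hly.comp (tendsto_add_atTop_nat N)
  have hlv' : Tendsto (fun k => l (k + N) • y (k + N)) atTop (𝓝 v) :=
    hlv.comp (tendsto_add_atTop_nat N)
  have hnorm' : Tendsto (fun k => ‖y (k + N)‖) atTop (𝓝 0) := by simpa using hy0'.norm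
  have hrpow : ∀ e : ℝ, 0 < e →
      Tendsto (fun k => ‖y (k + N)‖ ^ e) atTop (𝓝 0) := by
    intro e he
    have hc : ContinuousAt (fun t : ℝ => t ^ e) 0 :=
      Real.continuousAt_rpow_const 0 e (Or.inr he.le)
    have := hc.tendsto.comp hnorm'
    simpa [Real.zero_rpow he.ne', Function.comp_def] using this
  refine ⟨x, fun k => l (k + N), hxX, ?_, fun k => hl _, ?_⟩
  · -- x → 0
    rw [tendsto_iff_dist_tendsto_zero]
    have hb : ∀ k, dist (x k) 0 ≤ (C + 1) * ‖y (k + N)‖ ^ d + ‖y (k + N)‖ := by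
      intro k
      calc dist (x k) 0 ≤ dist (x k) (y (k + N)) + dist (y (k + N)) 0 := dist_triangle _ _ _
        _ ≤ (C + 1) * ‖y (k + N)‖ ^ d + ‖y (k + N)‖ := by
            rw [dist_comm (x k), dist_zero_right]
            exact add_le_add (le_of_lt (hxd k)) le_rfl
    have hg : Tendsto (fun k => (C + 1) * ‖y (k + N)‖ ^ d + ‖y (k + N)‖) atTop (𝓝 0) := by
      have := ((hrpow d (by linarith)).const_mul (C + 1)).add hnorm'
      simpa using this
    exact squeeze_zero (fun k => dist_nonneg) hb hg
  · -- l • x → v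
    have hdiff : Tendsto (fun k => l (k + N) • x k - l (k + N) • y (k + N)) atTop (𝓝 0) := by
      refine squeeze_zero_norm (a := fun k => (C + 1) * ((l (k + N) * ‖y (k + N)‖) * ‖y (k + N)‖ ^ (d - 1))) ?_ ?_
      · intro k
        have hsplit : ‖y (k + N)‖ ^ d = ‖y (k + N)‖ * ‖y (k + N)‖ ^ (d - 1) := by
          have hadd := Real.rpow_add (hypos k) 1 (d - 1)
          rw [Real.rpow_one] at hadd
          rw [show (1 : ℝ) + (d - 1) = d by ring] at hadd
          exact hadd
        have h1 : ‖l (k + N) • x k - l (k + N) • y (k + N)‖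
            = l (k + N) * dist (y (k + N)) (x k) := by
          rw [← smul_sub, norm_smul, Real.norm_eq_abs, abs_of_pos (hl _),
            dist_comm, dist_eq_norm]
        rw [h1]
        have := hxd k
        have hlk := hl (k + N)
        have hpd : 0 < ‖y (k + N)‖ ^ (d - 1) := Real.rpow_pos_of_pos (hypos k) _
        calc l (k + N) * dist (y (k + N)) (x k)
            ≤ l (k + N) * ((C + 1) * ‖y (k + N)‖ ^ d) :=
              mul_le_mul_of_nonneg_left (le_of_lt this) (le_of_lt hlk)
          _ = (C + 1) * ((l (k + N) * ‖y (k + N)‖) * ‖y (k + N)‖ ^ (d - 1)) := by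
              rw [hsplit]; ring
      · have := ((hly'.mul (hrpow (d - 1) (by linarith))).const_mul (C + 1))
        simpa using this
    have := hlv'.add hdiff
    simpa using this

/-- ST-equivalent germs at 0 have the same tangent cone. -/
theorem stmt_13 (n : ℕ) (X Y : Set (EuclideanSpace ℝ (Fin n)))
    (hX : (0 : EuclideanSpace ℝ (Fin n)) ∈ closure X)
    (hY : (0 : EuclideanSpace ℝ (Fin n)) ∈ closure Y)
    (d₁ d₂ C₁ C₂ : ℝ) (hd₁ : 1 < d₁) (hd₂ : 1 < d₂) (hC₁ : 0 < C₁) (hC₂ : 0 < C₂)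
    (ε : ℝ) (hε : 0 < ε)
    (hYX : ∀ y ∈ Y ∩ ball (0 : EuclideanSpace ℝ (Fin n)) ε,
      Metric.infDist y X ≤ C₁ * ‖y‖ ^ d₁)
    (hXY : ∀ x ∈ X ∩ ball (0 : EuclideanSpace ℝ (Fin n)) ε,
      Metric.infDist x Y ≤ C₂ * ‖x‖ ^ d₂) :
    tangentConeAtZero X = tangentConeAtZero Y := by
  exact Set.Subset.antisymm (tc_subset hY hd₂ hC₂ hε hXY) (tc_subset hX hd₁ hC₁ hε hYX)
end

section
/- Let X = ℝ × {0} ⊆ ℝ² and Y = {(x, |x·log|x||) : x ≠ 0} ∪ {(0,0)} ⊆ ℝ². Define h : X → Y by h(0)=(0,0) and h(x) = (x, |x log|x||) for x ≠ 0. Then for every α ∈ (0,1) the map h is bi-α-Hölder near 0: there is L ≥ 1 such that (1/L)|x₁-x₂|^{1/α} ≤ ‖h(x₁)-h(x₂)‖ ≤ L|x₁-x₂|^α for all x₁, x₂ sufficiently small. -/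
open Metric Set

/-- Basic bound: for `0 ≤ t ≤ 1`, `t * |log t| ≤ t ^ α / (1 - α)`. -/
lemma stmt_15_aux_A {α : ℝ} (hα1 : α < 1) {t : ℝ} (ht0 : 0 ≤ t) (ht1 : t ≤ 1) :
    t * abs (Real.log t) ≤ t ^ α / (1 - α) := by
  have h1α : 0 < 1 - α := by linarith
  rcases eq_or_lt_of_le ht0 with h | h
  · simp [← h]
    positivity
  · have hlog : abs (Real.log t) = Real.log (1 / t) := by
      rw [abs_of_nonpos (Real.log_nonpos ht0 ht1), one_div, Real.log_inv]
    rw [hlog]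
    have hle := Real.log_le_rpow_div (by positivity : (0:ℝ) ≤ 1 / t) h1α
    have key : t * ((1 / t) ^ (1 - α) / (1 - α)) = t ^ α / (1 - α) := by
      have e1 : (1 / t) ^ (1 - α) = t ^ (-(1 - α)) := by
        rw [one_div, Real.inv_rpow ht0, ← Real.rpow_neg ht0]
      have e2 : t * t ^ (-(1 - α)) = t ^ α := by
        calc t * t ^ (-(1 - α)) = t ^ (1:ℝ) * t ^ (-(1 - α)) := by rw [Real.rpow_one]
          _ = t ^ (1 + -(1 - α)) := (Real.rpow_add h _ _).symm
          _ = t ^ α := by ring_nf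
      rw [e1, ← e2]; ring
    calc t * Real.log (1 / t) ≤ t * ((1 / t) ^ (1 - α) / (1 - α)) :=
          mul_le_mul_of_nonneg_left hle ht0
      _ = t ^ α / (1 - α) := key

/-- For `0 ≤ t ≤ 1` and `0 < α ≤ 1`, `t ≤ t ^ α`. -/
lemma stmt_15_aux_pow {α : ℝ} (hα0 : 0 < α) (hα1 : α ≤ 1) {t : ℝ} (ht0 : 0 ≤ t)
    (ht1 : t ≤ 1) : t ≤ t ^ α := by
  rcases eq_or_lt_of_le ht0 with h | h
  · rw [← h, Real.zero_rpow (ne_of_gt hα0)]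
  · calc t = t ^ (1:ℝ) := (Real.rpow_one t).symm
      _ ≤ t ^ α := Real.rpow_le_rpow_of_exponent_ge h ht1 hα1

/-- Hölder estimate on `[0,1]` (ordered version). -/
lemma stmt_15_aux_B {α : ℝ} (hα0 : 0 < α) (hα1 : α < 1) {a b : ℝ}
    (hb0 : 0 ≤ b) (hba : b ≤ a) (ha1 : a ≤ 1) :
    |a * abs (Real.log a) - b * abs (Real.log b)| ≤ (a - b) ^ α / (1 - α) := by
  have h1α : 0 < 1 - α := by linarith
  have ha0 : 0 ≤ a := le_trans hb0 hba
  have hd0 : 0 ≤ a - b := by linarith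
  have hd1 : a - b ≤ 1 := by linarith
  have hA := stmt_15_aux_A hα1 hd0 hd1
  have hd_pow : a - b ≤ (a - b) ^ α := stmt_15_aux_pow hα0 (le_of_lt hα1) hd0 hd1
  have hd_pow_nonneg : 0 ≤ (a - b) ^ α := Real.rpow_nonneg hd0 α
  have hd_le : a - b ≤ (a - b) ^ α / (1 - α) := by
    calc a - b ≤ (a - b) ^ α := hd_pow
      _ ≤ (a - b) ^ α / (1 - α) := by
        rw [le_div_iff₀ h1α]; nlinarith
  rcases eq_or_lt_of_le hb0 with hb | hb
  · -- b = 0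
    rw [← hb]
    simp only [zero_mul, sub_zero]
    rw [abs_of_nonneg (by positivity : (0:ℝ) ≤ a * |Real.log a|)]
    exact stmt_15_aux_A hα1 ha0 (by linarith)
  · -- 0 < b
    have ha : 0 < a := lt_of_lt_of_le hb hba
    have hla : Real.log a ≤ 0 := Real.log_nonpos ha0 ha1
    have hlb : Real.log b ≤ 0 := Real.log_nonpos hb0 (by linarith)
    have hfa : a * abs (Real.log a) = -(a * Real.log a) := by
      rw [abs_of_nonpos hla]; ring
    have hfb : b * abs (Real.log b) = -(b * Real.log b) := by
      rw [abs_of_nonpos hlb]; ring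
    have hlog_mono : Real.log b ≤ Real.log a := Real.log_le_log hb hba
    have hblog0 : 0 ≤ b * (Real.log a - Real.log b) := by nlinarith
    have hblogd : b * (Real.log a - Real.log b) ≤ a - b := by
      have h1 : Real.log (a / b) ≤ a / b - 1 :=
        Real.log_le_sub_one_of_pos (by positivity)
      rw [Real.log_div (ne_of_gt ha) (ne_of_gt hb)] at h1
      have := mul_le_mul_of_nonneg_left h1 hb0
      calc b * (Real.log a - Real.log b) ≤ b * (a / b - 1) := this
        _ = a - b := by field_simp
    -- bound for -(a-b) * log a
    have hkey : -((a - b) * Real.log a) ≤ (a - b) * abs (Real.log (a - b)) := by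
      rcases eq_or_lt_of_le hd0 with hd | hd
      · rw [← hd]; simp
      · have h1 : Real.log (a - b) ≤ Real.log a := Real.log_le_log hd (by linarith)
        have h2 : abs (Real.log (a - b)) = -Real.log (a - b) := by
          rw [abs_of_nonpos (Real.log_nonpos (le_of_lt hd) hd1)]
        rw [h2]; nlinarith
    have h6 : (a - b) * Real.log a ≤ 0 := mul_nonpos_of_nonneg_of_nonpos hd0 hla
    rw [hfa, hfb, abs_sub_le_iff]
    constructor
    · nlinarith
    · nlinarith

/-- Symmetric Hölder estimate on `[0,1]` for `f x = |x * log |x||`. -/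
lemma stmt_15_aux_C {α : ℝ} (hα0 : 0 < α) (hα1 : α < 1) {a b : ℝ}
    (ha0 : 0 ≤ a) (ha1 : a ≤ 1) (hb0 : 0 ≤ b) (hb1 : b ≤ 1) :
    |a * abs (Real.log a) - b * abs (Real.log b)| ≤ |a - b| ^ α / (1 - α) := by
  rcases le_total b a with h | h
  · rw [abs_of_nonneg (by linarith : (0:ℝ) ≤ a - b)]
    exact stmt_15_aux_B hα0 hα1 hb0 h ha1
  · rw [abs_sub_comm, abs_sub_comm a b, abs_of_nonneg (by linarith : (0:ℝ) ≤ b - a)]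
    exact stmt_15_aux_B hα0 hα1 ha0 h hb1

/-- the map h(x) = (x, |x log|x||) is bi-α-Hölder near 0 for every
α ∈ (0,1). (Here |0 · log 0| = 0, consistent with Lean's `Real.log 0 = 0`.) -/
theorem stmt_15 :
    let f : ℝ → ℝ := fun x => abs (x * Real.log (abs x))
    let h : ℝ → ℝ × ℝ := fun x => (x, f x)
    ∀ α : ℝ, 0 < α → α < 1 →
      ∃ L : ℝ, 1 ≤ L ∧ ∃ ε : ℝ, 0 < ε ∧
        ∀ x₁ ∈ ball (0 : ℝ) ε, ∀ x₂ ∈ ball (0 : ℝ) ε,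
          (1 / L) * |x₁ - x₂| ^ (1 / α) ≤ ‖h x₁ - h x₂‖ ∧
          ‖h x₁ - h x₂‖ ≤ L * |x₁ - x₂| ^ α := by
  intro f h α hα0 hα1
  have h1α : 0 < 1 - α := by linarith
  refine ⟨1 / (1 - α), ?_, 1/2, by norm_num, ?_⟩
  · rw [le_div_iff₀ h1α]; linarith
  intro x₁ hx₁ x₂ hx₂
  rw [mem_ball, dist_zero_right, Real.norm_eq_abs] at hx₁ hx₂
  set d := |x₁ - x₂| with hd_def
  have hd0 : 0 ≤ d := abs_nonneg _
  have hd1 : d ≤ 1 := by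
    calc d ≤ |x₁| + |x₂| := abs_sub _ _
      _ ≤ 1 := by linarith
  -- norm computation
  have hnorm : ‖h x₁ - h x₂‖ = max d |f x₁ - f x₂| := by
    simp only [h, Prod.mk_sub_mk, Prod.norm_def, Real.norm_eq_abs]
    rfl
  -- f x = f |x|
  have hf_abs : ∀ x : ℝ, f x = |x| * abs (Real.log |x|) := by
    intro x
    simp only [f, abs_mul]
  -- Hölder bound on f
  have hf_holder : |f x₁ - f x₂| ≤ d ^ α / (1 - α) := by
    rw [hf_abs x₁, hf_abs x₂]
    have h1 : |(|x₁| : ℝ) * abs (Real.log |x₁|) - |x₂| * abs (Real.log |x₂|)| ≤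
        abs ((|x₁| : ℝ) - |x₂|) ^ α / (1 - α) :=
      stmt_15_aux_C hα0 hα1 (abs_nonneg _) (by linarith) (abs_nonneg _) (by linarith)
    have h2 : abs ((|x₁| : ℝ) - |x₂|) ^ α ≤ d ^ α :=
      Real.rpow_le_rpow (abs_nonneg _) (abs_abs_sub_abs_le_abs_sub _ _) (le_of_lt hα0)
    calc |(|x₁| : ℝ) * abs (Real.log |x₁|) - |x₂| * abs (Real.log |x₂|)| ≤
        abs ((|x₁| : ℝ) - |x₂|) ^ α / (1 - α) := h1
      _ ≤ d ^ α / (1 - α) := by gcongr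
  have hdpow_nonneg : 0 ≤ d ^ α := Real.rpow_nonneg hd0 α
  constructor
  · -- lower bound
    have hle1 : d ^ (1 / α) ≤ d := by
      rcases eq_or_lt_of_le hd0 with hd | hd
      · rw [← hd, Real.zero_rpow (by positivity : (1/α) ≠ 0)]
      · calc d ^ (1/α) ≤ d ^ (1:ℝ) := by
              apply Real.rpow_le_rpow_of_exponent_ge hd hd1
              rw [le_div_iff₀ hα0]; linarith
          _ = d := Real.rpow_one d
    have hcoef : 1 / (1 / (1 - α)) = 1 - α := by field_simp
    rw [hnorm, hcoef]
    have hp : 0 ≤ d ^ (1/α) := Real.rpow_nonneg hd0 _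
    calc (1 - α) * d ^ (1/α) ≤ 1 * d ^ (1/α) := by nlinarith
      _ = d ^ (1/α) := one_mul _
      _ ≤ d := hle1
      _ ≤ max d |f x₁ - f x₂| := le_max_left _ _
  · -- upper bound
    rw [hnorm]
    have hL : (1 : ℝ) ≤ 1 / (1 - α) := by rw [le_div_iff₀ h1α]; linarith
    have hd_le : d ≤ 1 / (1 - α) * d ^ α := by
      have := stmt_15_aux_pow hα0 (le_of_lt hα1) hd0 hd1
      nlinarith
    have hf_le : |f x₁ - f x₂| ≤ 1 / (1 - α) * d ^ α := by
      rw [div_mul_eq_mul_div, one_mul]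
      rwa [div_eq_mul_inv, mul_comm] at hf_holder ⊢
    exact max_le hd_le hf_le
end

section
/- Let X ⊆ ℝⁿ contain 0 and suppose for some r₀ > 0 and for each ε ∈ (0, r₀] there is a homeomorphism H : cone over (S(0,ε) ∩ X) → closed B(0,ε) ∩ X preserving distance to 0, such that r_s(x) := H(s·H⁻¹(x)) satisfies: r_s is well defined, r_s(B̄(0,ε)∩X) = B̄(0,sε)∩X, and r_s⁻¹ is Lipschitz with constant at most K/s for a constant K independent of s ∈ (0,1]. Then there is a constant M > 0 such that for all 0 < r < ρ ≤ r₀, vol_k(X ∩ B(0,ρ)) ≤ M·(ρ/r)^k · vol_k(X ∩ B(0,r)), where k = dim(X,0). -/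
open Metric Set MeasureTheory

/-- if X admits a Lipschitz conic structure near 0 — for each scale
ε ≤ r₀ and each s ∈ (0,1] an inverse retraction Q mapping X ∩ B̄(0,sε) onto
X ∩ B̄(0,ε) with Lipschitz constant at most K/s — then
vol_k(X ∩ B̄(0,ρ)) ≤ M (ρ/r)^k vol_k(X ∩ B̄(0,r)) for all 0 < r < ρ ≤ r₀. -/
theorem stmt_18 (n k : ℕ) (X : Set (EuclideanSpace ℝ (Fin n)))
    (h0 : (0 : EuclideanSpace ℝ (Fin n)) ∈ X)
    (r₀ : ℝ) (hr₀ : 0 < r₀)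
    (K : ℝ) (hK : 0 < K)
    (hconic : ∀ ε : ℝ, 0 < ε → ε ≤ r₀ → ∀ s : ℝ, 0 < s → s ≤ 1 →
      ∃ Q : EuclideanSpace ℝ (Fin n) → EuclideanSpace ℝ (Fin n),
        (∀ y₁ ∈ closedBall (0 : EuclideanSpace ℝ (Fin n)) (s * ε) ∩ X,
         ∀ y₂ ∈ closedBall (0 : EuclideanSpace ℝ (Fin n)) (s * ε) ∩ X,
          ‖Q y₁ - Q y₂‖ ≤ (K / s) * ‖y₁ - y₂‖) ∧
        Q '' (closedBall (0 : EuclideanSpace ℝ (Fin n)) (s * ε) ∩ X) =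
          closedBall (0 : EuclideanSpace ℝ (Fin n)) ε ∩ X) :
    ∃ M : ℝ, 0 < M ∧ ∀ r ρ : ℝ, 0 < r → r < ρ → ρ ≤ r₀ →
      μH[(k : ℝ)] (X ∩ closedBall (0 : EuclideanSpace ℝ (Fin n)) ρ) ≤
        ENNReal.ofReal (M * (ρ / r) ^ (k : ℕ)) *
          μH[(k : ℝ)] (X ∩ closedBall (0 : EuclideanSpace ℝ (Fin n)) r) := by
  refine ⟨K ^ k, pow_pos hK k, fun r ρ hr hrρ hρ => ?_⟩
  have hρ0 : 0 < ρ := hr.trans hrρ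
  set s : ℝ := r / ρ with hs
  have hs0 : 0 < s := div_pos hr hρ0
  have hs1 : s ≤ 1 := by
    rw [hs, div_le_one hρ0]; exact hrρ.le
  obtain ⟨Q, hlip, himg⟩ := hconic ρ hρ0 hρ s hs0 hs1
  have hsr : s * ρ = r := div_mul_cancel₀ r hρ0.ne'
  rw [hsr] at hlip himg
  have hC0 : 0 ≤ K / s := le_of_lt (div_pos hK hs0)
  set C : NNReal := ⟨K / s, hC0⟩ with hCdef
  have hLip : LipschitzOnWith C Q
      (closedBall (0 : EuclideanSpace ℝ (Fin n)) r ∩ X) := by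
    rw [lipschitzOnWith_iff_dist_le_mul]
    intro y₁ hy₁ y₂ hy₂
    rw [dist_eq_norm, dist_eq_norm]; exact hlip y₁ hy₁ y₂ hy₂
  have key := hLip.hausdorffMeasure_image_le (d := (k : ℝ)) (Nat.cast_nonneg k)
  rw [himg] at key
  rw [inter_comm X, inter_comm X]
  refine key.trans ?_
  gcongr
  have h1 : (C : ENNReal) = ENNReal.ofReal (K / s) := by
    rw [← ENNReal.ofReal_coe_nnreal]; rfl
  rw [h1, ENNReal.ofReal_rpow_of_pos (div_pos hK hs0)]
  apply ENNReal.ofReal_le_ofReal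
  rw [Real.rpow_natCast, ← mul_pow]
  gcongr
  rw [hs, div_div_eq_mul_div, mul_div_assoc]
end
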